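/- Under the setup of the alternating minimization for F(X1, C, B, D) = ‖(A1 − X1) ⊙ W1‖_F² + ‖A2 − X1C − BD‖_F² (sequences (X1)_p, C_p, B_p, D_p satisfying the first-order stationarity equations, m_p = F((X1)_p, C_p, B_p, D_p)), assume Σ_{p=1}^∞ √(m_p − m_{p+1}) < ∞. If there exists γ > 0 such that B_pᵀB_p ≥ γ·I_{r−k} (in the positive semidefinite order) for all sufficiently large p, then lim_{p→∞} D_p exists. -/

import Mathlib

open Matrix Filter Topology

noncomputable def frob {α β : Type*} [Fintype α] [Fintype β] (M : Matrix α β ℝ) : ℝ :=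
  Real.sqrt (∑ i, ∑ j, (M i j) ^ 2)

noncomputable def projCol {m k : ℕ} (B : Matrix (Fin m) (Fin k) ℝ) :
    Matrix (Fin m) (Fin m) ℝ :=
  B * (Bᵀ * B)⁻¹ * Bᵀ


namespace StmtAux

variable {α β η : Type*} [Fintype α] [Fintype β] [Fintype η] [DecidableEq η]

noncomputable def f (M : Matrix α β ℝ) : ℝ := ∑ i, ∑ j, (M i j) ^ 2
noncomputable def ip (M N : Matrix α β ℝ) : ℝ := ∑ i, ∑ j, M i j * N i j

lemma f_nonneg (M : Matrix α β ℝ) : 0 ≤ f M :=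
  Finset.sum_nonneg fun _ _ => Finset.sum_nonneg fun _ _ => sq_nonneg _

lemma ip_comm (M N : Matrix α β ℝ) : ip M N = ip N M :=
  Finset.sum_congr rfl fun _ _ => Finset.sum_congr rfl fun _ _ => mul_comm _ _

lemma ip_eq_trace (M N : Matrix α β ℝ) : ip M N = Matrix.trace (Mᵀ * N) := by
  simp only [ip, Matrix.trace, Matrix.diag, Matrix.mul_apply, Matrix.transpose_apply]
  exact Finset.sum_comm

lemma ip_mul_left (A : Matrix α η ℝ) (B : Matrix η β ℝ) (Cm : Matrix α β ℝ) :
    ip (A * B) Cm = ip B (Aᵀ * Cm) := by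
  rw [ip_eq_trace, ip_eq_trace, Matrix.transpose_mul, Matrix.mul_assoc]

lemma ip_mul_right (A : Matrix α η ℝ) (B : Matrix η β ℝ) (Cm : Matrix α β ℝ) :
    ip (A * B) Cm = ip A (Cm * Bᵀ) := by
  rw [ip_eq_trace, ip_eq_trace, Matrix.transpose_mul, Matrix.mul_assoc,
    Matrix.trace_mul_comm, Matrix.mul_assoc]

lemma ip_self (M : Matrix α β ℝ) : ip M M = f M :=
  Finset.sum_congr rfl fun _ _ => Finset.sum_congr rfl fun _ _ => (sq _).symm

lemma f_add (U V : Matrix α β ℝ) : f (U + V) = f U + 2 * ip U V + f V := by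
  simp only [f, ip, Matrix.add_apply, Finset.mul_sum, ← Finset.sum_add_distrib]
  exact Finset.sum_congr rfl fun _ _ => Finset.sum_congr rfl fun _ _ => by ring

lemma ip_zero_right (M : Matrix α β ℝ) : ip M (0 : Matrix α β ℝ) = 0 := by
  simp [ip]

lemma ip_sub_right (M X Y : Matrix α β ℝ) : ip M (X - Y) = ip M X - ip M Y := by
  simp only [ip, Matrix.sub_apply, mul_sub, Finset.sum_sub_distrib]

lemma ip_neg_left (M N : Matrix α β ℝ) : ip (-M) N = - ip M N := by
  simp [ip, Finset.sum_neg_distrib]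

lemma had_ip (M W H : Matrix α β ℝ) :
    ip (Matrix.hadamard M W) (Matrix.hadamard H W) =
      ip (Matrix.hadamard (Matrix.hadamard M W) W) H := by
  simp only [ip, Matrix.hadamard_apply]
  exact Finset.sum_congr rfl fun _ _ => Finset.sum_congr rfl fun _ _ => by ring

lemma psd_ip (P : Matrix η η ℝ) (hP : P.PosSemidef) (Dm : Matrix η β ℝ) :
    0 ≤ ip Dm (P * Dm) := by
  have h : ip Dm (P * Dm) = ∑ j, (fun i => Dm i j) ⬝ᵥ P.mulVec (fun i => Dm i j) := by
    simp only [ip, Matrix.mul_apply, dotProduct, Matrix.mulVec, dotProduct, Finset.mul_sum]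
    exact Finset.sum_comm
  rw [h]
  exact Finset.sum_nonneg fun j _ => by simpa using hP.dotProduct_mulVec_nonneg (fun i => Dm i j)

lemma gamma_bound {γ : ℝ} (Bm : Matrix α η ℝ)
    (hP : (Bmᵀ * Bm - γ • (1 : Matrix η η ℝ)).PosSemidef) (Dm : Matrix η β ℝ) :
    γ * f Dm ≤ f (Bm * Dm) := by
  have h1 : f (Bm * Dm) = ip Dm ((Bmᵀ * Bm) * Dm) := by
    rw [← ip_self, ip_mul_left, Matrix.mul_assoc]
  have h2 : γ * f Dm = ip Dm ((γ • (1 : Matrix η η ℝ)) * Dm) := by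
    simp only [Matrix.smul_mul, Matrix.one_mul]
    simp only [ip, Matrix.smul_apply, smul_eq_mul, f, Finset.mul_sum]
    exact Finset.sum_congr rfl fun _ _ => Finset.sum_congr rfl fun _ _ => by ring
  have h3 := psd_ip _ hP Dm
  rw [Matrix.sub_mul, ip_sub_right] at h3
  linarith [h1, h2, h3]

lemma entry_le (M : Matrix α β ℝ) (i : α) (j : β) : |M i j| ≤ Real.sqrt (f M) := by
  rw [← Real.sqrt_sq_eq_abs]
  apply Real.sqrt_le_sqrt
  calc (M i j) ^ 2 ≤ ∑ j', (M i j') ^ 2 :=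
        Finset.single_le_sum (f := fun j' => (M i j') ^ 2)
          (fun _ _ => sq_nonneg _) (Finset.mem_univ j)
    _ ≤ f M := Finset.single_le_sum (f := fun i' => ∑ j', (M i' j') ^ 2)
        (fun _ _ => Finset.sum_nonneg fun _ _ => sq_nonneg _) (Finset.mem_univ i)

lemma frob_sq (M : Matrix α β ℝ) : frob M ^ 2 = f M := Real.sq_sqrt (f_nonneg M)

end StmtAux


open StmtAux in
/-- **Theorem 4.4 (i).** If `Σ √(m_p − m_{p+1}) < ∞` and `B_pᵀB_p ≥ γ·I` (in the positive
semidefinite order) for all large `p` and some `γ > 0`, then `lim D_p` exists. -/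
theorem stmt_17
    {m k l s : ℕ}
    (A1 : Matrix (Fin m) (Fin k) ℝ) (A2 : Matrix (Fin m) (Fin l) ℝ)
    (W1 : Matrix (Fin m) (Fin k) ℝ) (hW1 : ∀ i j, 0 < W1 i j)
    (X1 : ℕ → Matrix (Fin m) (Fin k) ℝ) (C : ℕ → Matrix (Fin k) (Fin l) ℝ)
    (B : ℕ → Matrix (Fin m) (Fin s) ℝ) (D : ℕ → Matrix (Fin s) (Fin l) ℝ)
    (mseq : ℕ → ℝ)
    (hm : ∀ p, mseq p = frob (Matrix.hadamard (A1 - X1 p) W1) ^ 2 +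
      frob (A2 - X1 p * C p - B p * D p) ^ 2)
    (heq1 : ∀ p, Matrix.hadamard (Matrix.hadamard (X1 (p + 1) - A1) W1) W1 =
      (A2 - X1 (p + 1) * C p - B p * D p) * (C p)ᵀ)
    (heq2 : ∀ p, (X1 (p + 1))ᵀ * (A2 - X1 (p + 1) * C (p + 1) - B p * D p) = 0)
    (heq3 : ∀ p, (A2 - X1 (p + 1) * C (p + 1) - B (p + 1) * D p) * (D p)ᵀ = 0)
    (heq4 : ∀ p, (B (p + 1))ᵀ * (A2 - X1 (p + 1) * C (p + 1) - B (p + 1) * D (p + 1)) = 0)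
    (hsum : Summable (fun p => Real.sqrt (mseq p - mseq (p + 1))))
    (γ : ℝ) (hγ : 0 < γ) (N : ℕ)
    (hB : ∀ p, N ≤ p → ((B p)ᵀ * B p - γ • (1 : Matrix (Fin s) (Fin s) ℝ)).PosSemidef)
    :
    ∃ Ds : Matrix (Fin s) (Fin l) ℝ, Tendsto D atTop (nhds Ds) := by
  have key : ∀ p, mseq p - mseq (p + 1) =
      f (Matrix.hadamard (X1 (p + 1) - X1 p) W1) + f ((X1 (p + 1) - X1 p) * C p)
      + f (X1 (p + 1) * (C (p + 1) - C p)) + f ((B (p + 1) - B p) * D p)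
      + f (B (p + 1) * (D (p + 1) - D p)) := by
    intro p
    set X := X1 (p + 1) with hX
    set H := X1 (p + 1) - X1 p with hH
    set R1 := A2 - X1 (p + 1) * C p - B p * D p with hR1def
    set R2 := A2 - X1 (p + 1) * C (p + 1) - B p * D p with hR2def
    set R3 := A2 - X1 (p + 1) * C (p + 1) - B (p + 1) * D p with hR3def
    set R4 := A2 - X1 (p + 1) * C (p + 1) - B (p + 1) * D (p + 1) with hR4def
    have hA : Matrix.hadamard (A1 - X1 p) W1 =
        Matrix.hadamard (A1 - X) W1 + Matrix.hadamard H W1 := by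
      rw [← Matrix.add_hadamard]; congr 1; rw [hH, hX]; abel
    have hR0 : A2 - X1 p * C p - B p * D p = R1 + H * C p := by
      rw [hR1def, hH, Matrix.sub_mul]; abel
    have hR1 : R1 = R2 + X * (C (p + 1) - C p) := by
      rw [hR1def, hR2def, hX, Matrix.mul_sub]; abel
    have hR2 : R2 = R3 + (B (p + 1) - B p) * D p := by
      rw [hR2def, hR3def, Matrix.sub_mul]; abel
    have hR3 : R3 = R4 + B (p + 1) * (D (p + 1) - D p) := by
      rw [hR3def, hR4def, Matrix.mul_sub]; abel
    -- cross terms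
    have c1 : ip (Matrix.hadamard (A1 - X) W1) (Matrix.hadamard H W1)
        + ip R1 (H * C p) = 0 := by
      have e1 : ip (Matrix.hadamard (A1 - X) W1) (Matrix.hadamard H W1)
          = ip (Matrix.hadamard (Matrix.hadamard (A1 - X) W1) W1) H := had_ip _ _ _
      have e2 : Matrix.hadamard (Matrix.hadamard (A1 - X) W1) W1
          = -(Matrix.hadamard (Matrix.hadamard (X - A1) W1) W1) := by
        ext i j
        simp only [Matrix.hadamard_apply, Matrix.sub_apply, Matrix.neg_apply]
        ring
      have e3 : Matrix.hadamard (Matrix.hadamard (X - A1) W1) W1 = R1 * (C p)ᵀ := heq1 p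
      have e4 : ip R1 (H * C p) = ip (R1 * (C p)ᵀ) H := by
        rw [ip_comm, ip_mul_right, ip_comm]
      rw [e1, e2, e3, ip_neg_left, e4]
      ring
    have c2 : ip R2 (X * (C (p + 1) - C p)) = 0 := by
      rw [ip_comm, ip_mul_left, hX, heq2 p, ip_zero_right]
    have c3 : ip R3 ((B (p + 1) - B p) * D p) = 0 := by
      rw [ip_comm, ip_mul_right, heq3 p, ip_zero_right]
    have c4 : ip R4 (B (p + 1) * (D (p + 1) - D p)) = 0 := by
      rw [ip_comm, ip_mul_left, heq4 p, ip_zero_right]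
    have s1 : f (Matrix.hadamard (A1 - X1 p) W1) =
        f (Matrix.hadamard (A1 - X) W1)
        + 2 * ip (Matrix.hadamard (A1 - X) W1) (Matrix.hadamard H W1)
        + f (Matrix.hadamard H W1) := by rw [hA, f_add]
    have s2 : f (A2 - X1 p * C p - B p * D p) =
        f R1 + 2 * ip R1 (H * C p) + f (H * C p) := by rw [hR0, f_add]
    have s3 : f R1 = f R2 + f (X * (C (p + 1) - C p)) := by
      rw [hR1, f_add, c2]; ring
    have s4 : f R2 = f R3 + f ((B (p + 1) - B p) * D p) := by
      rw [hR2, f_add, c3]; ring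
    have s5 : f R3 = f R4 + f (B (p + 1) * (D (p + 1) - D p)) := by
      rw [hR3, f_add, c4]; ring
    have hmp : mseq p = f (Matrix.hadamard (A1 - X1 p) W1)
        + f (A2 - X1 p * C p - B p * D p) := by
      rw [hm p, frob_sq, frob_sq]
    have hmp1 : mseq (p + 1) = f (Matrix.hadamard (A1 - X) W1) + f R4 := by
      rw [hm (p + 1), frob_sq, frob_sq]
    rw [hmp, hmp1, s1, s2, s3, s4, s5]
    linarith [c1]
  -- nonnegativity of increments and the main bound
  have hmono : ∀ p, 0 ≤ mseq p - mseq (p + 1) := by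
    intro p
    rw [key p]
    have := f_nonneg (Matrix.hadamard (X1 (p + 1) - X1 p) W1)
    have := f_nonneg ((X1 (p + 1) - X1 p) * C p)
    have := f_nonneg (X1 (p + 1) * (C (p + 1) - C p))
    have := f_nonneg ((B (p + 1) - B p) * D p)
    have := f_nonneg (B (p + 1) * (D (p + 1) - D p))
    linarith
  have hbound : ∀ p, N ≤ p → γ * f (D (p + 1) - D p) ≤ mseq p - mseq (p + 1) := by
    intro p hp
    have h1 : γ * f (D (p + 1) - D p) ≤ f (B (p + 1) * (D (p + 1) - D p)) :=
      gamma_bound (B (p + 1)) (hB (p + 1) (by omega)) _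
    have h2 : f (B (p + 1) * (D (p + 1) - D p)) ≤ mseq p - mseq (p + 1) := by
      rw [key p]
      have := f_nonneg (Matrix.hadamard (X1 (p + 1) - X1 p) W1)
      have := f_nonneg ((X1 (p + 1) - X1 p) * C p)
      have := f_nonneg (X1 (p + 1) * (C (p + 1) - C p))
      have := f_nonneg ((B (p + 1) - B p) * D p)
      linarith
    linarith
  set g : ℕ → ℝ := fun p => Real.sqrt (mseq p - mseq (p + 1)) / Real.sqrt γ with hg
  have hgsum : Summable g := hsum.div_const _
  have hentrybound : ∀ p, N ≤ p → ∀ i j, |D (p + 1) i j - D p i j| ≤ g p := by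
    intro p hp i j
    have h1 : |D (p + 1) i j - D p i j| ≤ Real.sqrt (f (D (p + 1) - D p)) := by
      have := entry_le (D (p + 1) - D p) i j
      simpa using this
    have h2 : f (D (p + 1) - D p) ≤ (mseq p - mseq (p + 1)) / γ := by
      rw [le_div_iff₀ hγ]
      have := hbound p hp
      linarith
    have h3 : Real.sqrt (f (D (p + 1) - D p)) ≤ Real.sqrt ((mseq p - mseq (p + 1)) / γ) :=
      Real.sqrt_le_sqrt h2
    have h4 : Real.sqrt ((mseq p - mseq (p + 1)) / γ) = g p := by
      rw [hg]
      exact Real.sqrt_div (hmono p) γ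
    linarith
  have hentry : ∀ i j, ∃ L : ℝ, Tendsto (fun p => D p i j) atTop (nhds L) := by
    intro i j
    have hc : CauchySeq (fun p => D p i j) := by
      apply cauchySeq_of_summable_dist
      rw [← summable_nat_add_iff N]
      have htail : Summable (fun n : ℕ => g (n + N)) := (summable_nat_add_iff N).2 hgsum
      refine Summable.of_nonneg_of_le (fun n => dist_nonneg) (fun n => ?_) htail
      rw [Real.dist_eq, abs_sub_comm]
      exact hentrybound (n + N) (by omega) i j
    exact cauchySeq_tendsto_of_complete hc
  choose Ds hDs using hentry
  refine ⟨Matrix.of Ds, ?_⟩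
  refine tendsto_pi_nhds.2 ?_
  intro i
  rw [tendsto_pi_nhds]
  intro j
  exact hDs i j
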